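/- Let f : I → I be a continuous map of a compact interval I. If f has a periodic point of odd least period m ≥ 3 and f has no periodic point of odd least period k with 1 < k < m, then f² is strictly turbulent. -/
import Mathlib


open Filter Set Function

/-- `limsup_{n→∞} |fⁿ(x) − fⁿ(y)|`. -/
noncomputable def limsupD (f : ℝ → ℝ) (x y : ℝ) : ℝ :=
  Filter.limsup (fun n : ℕ => |f^[n] x - f^[n] y|) Filter.atTop

/-- `liminf_{n→∞} |fⁿ(x) − fⁿ(y)|`. -/
noncomputable def liminfD (f : ℝ → ℝ) (x y : ℝ) : ℝ :=
  Filter.liminf (fun n : ℕ => |f^[n] x - f^[n] y|) Filter.atTop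

/-- `p` is a periodic point of `f`. -/
def PerPt (f : ℝ → ℝ) (p : ℝ) : Prop := ∃ m : ℕ, 0 < m ∧ f^[m] p = p

/-- `p` is a periodic point of `f` of least period `k`. -/
def LeastPeriod (f : ℝ → ℝ) (p : ℝ) (k : ℕ) : Prop :=
  f^[k] p = p ∧ ∀ i : ℕ, 0 < i → i < k → f^[i] p ≠ p

/-- `S ⊆ I` is a `δ`-scrambled set of the map `f : I → I`. -/
def ScrambledSet (f : ℝ → ℝ) (I : Set ℝ) (δ : ℝ) (S : Set ℝ) : Prop :=
  S ⊆ I ∧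
  (∀ x ∈ S, ∀ y ∈ S, x ≠ y → δ ≤ limsupD f x y ∧ liminfD f x y = 0) ∧
  (∀ x ∈ S, ∀ p ∈ I, PerPt f p → δ / 2 ≤ limsupD f x p)

/-- The ω-limit set of `x` under `f`: the set of limit points of the orbit of `x`. -/
def OmegaSet (f : ℝ → ℝ) (x : ℝ) : Set ℝ :=
  {y : ℝ | ∀ ε > 0, ∀ N : ℕ, ∃ n ≥ N, |f^[n] x - y| < ε}

/-- `x` is a recurrent point of `f`. -/
def RecPt (f : ℝ → ℝ) (x : ℝ) : Prop := x ∈ OmegaSet f x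

/-- `f` is turbulent on `I`: there are closed nondegenerate subintervals `J₀, J₁` of `I`
with at most one common point with `f(J₀) ∩ f(J₁) ⊇ J₀ ∪ J₁`. -/
def Turbulent (f : ℝ → ℝ) (I : Set ℝ) : Prop :=
  ∃ p q r s : ℝ, p < q ∧ r < s ∧ Set.Icc p q ⊆ I ∧ Set.Icc r s ⊆ I ∧
    (Set.Icc p q ∩ Set.Icc r s).Subsingleton ∧
    Set.Icc p q ∪ Set.Icc r s ⊆ f '' Set.Icc p q ∩ f '' Set.Icc r s

/-- `f` is strictly turbulent on `I`: the two intervals can be chosen disjoint. -/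
def StrictlyTurbulent (f : ℝ → ℝ) (I : Set ℝ) : Prop :=
  ∃ p q r s : ℝ, p < q ∧ r < s ∧ Set.Icc p q ⊆ I ∧ Set.Icc r s ⊆ I ∧
    Disjoint (Set.Icc p q) (Set.Icc r s) ∧
    Set.Icc p q ∪ Set.Icc r s ⊆ f '' Set.Icc p q ∩ f '' Set.Icc r s

section TurbAux

variable {f : ℝ → ℝ} {A B : ℝ}

lemma uIcc_subset_IccAB (hAB : A ≤ B) {x y : ℝ} (hx : x ∈ Set.Icc A B)
    (hy : y ∈ Set.Icc A B) : Set.uIcc x y ⊆ Set.Icc A B := by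
  rw [← Set.uIcc_of_le hAB]
  exact Set.uIcc_subset_uIcc (by rwa [Set.uIcc_of_le hAB]) (by rwa [Set.uIcc_of_le hAB])

lemma uIcc_eq_Icc_minmax (a b : ℝ) : Set.uIcc a b = Set.Icc (min a b) (max a b) := rfl

lemma contOn_iterate (hf : ContinuousOn f (Set.Icc A B))
    (hmap : Set.MapsTo f (Set.Icc A B) (Set.Icc A B)) (n : ℕ) :
    ContinuousOn (f^[n]) (Set.Icc A B) := by
  induction n with
  | zero => simpa using continuousOn_id
  | succ n ih =>
    rw [Function.iterate_succ']
    exact hf.comp ih (hmap.iterate n)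

/-- Pullback lemma: if `[k₁,k₂] ⊆ f([a,b])` then some subinterval maps exactly onto it. -/
lemma interval_pullback {a b k₁ k₂ : ℝ} (hk : k₁ ≤ k₂)
    (hcont : ContinuousOn f (Set.Icc a b))
    (hcov : Set.Icc k₁ k₂ ⊆ f '' Set.Icc a b) :
    ∃ a' b', a ≤ a' ∧ a' ≤ b' ∧ b' ≤ b ∧ f '' Set.Icc a' b' = Set.Icc k₁ k₂ := by
  obtain ⟨u₀, hu₀m, hu₀⟩ := hcov (Set.left_mem_Icc.2 hk)
  obtain ⟨v₀, hv₀m, hv₀⟩ := hcov (Set.right_mem_Icc.2 hk)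
  rcases le_total u₀ v₀ with huv | huv
  · set S₁ : Set ℝ := Set.Icc u₀ v₀ ∩ f ⁻¹' {k₁} with hS₁
    have hS₁c : IsClosed S₁ :=
      (hcont.mono (Set.Icc_subset_Icc hu₀m.1 hv₀m.2)).preimage_isClosed_of_isClosed
        isClosed_Icc isClosed_singleton
    have hS₁ne : S₁.Nonempty := ⟨u₀, ⟨le_refl _, huv⟩, hu₀⟩
    have hS₁bdd : BddAbove S₁ := (bddAbove_Icc).mono Set.inter_subset_left
    set a' := sSup S₁ with ha'
    have ha'mem : a' ∈ S₁ := hS₁c.csSup_mem hS₁ne hS₁bdd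
    have hfa' : f a' = k₁ := ha'mem.2
    have ha'le : a' ≤ v₀ := ha'mem.1.2
    set S₂ : Set ℝ := Set.Icc a' v₀ ∩ f ⁻¹' {k₂} with hS₂
    have hS₂c : IsClosed S₂ :=
      (hcont.mono (Set.Icc_subset_Icc (hu₀m.1.trans ha'mem.1.1) hv₀m.2)).preimage_isClosed_of_isClosed
        isClosed_Icc isClosed_singleton
    have hS₂ne : S₂.Nonempty := ⟨v₀, ⟨ha'le, le_refl _⟩, hv₀⟩
    have hS₂bdd : BddBelow S₂ := (bddBelow_Icc).mono Set.inter_subset_left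
    set b' := sInf S₂ with hb'
    have hb'mem : b' ∈ S₂ := hS₂c.csInf_mem hS₂ne hS₂bdd
    have hfb' : f b' = k₂ := hb'mem.2
    have hab' : a' ≤ b' := hb'mem.1.1
    have haa' : a ≤ a' := hu₀m.1.trans ha'mem.1.1
    have hb'b : b' ≤ b := hb'mem.1.2.trans hv₀m.2
    have hcont' : ContinuousOn f (Set.Icc a' b') := hcont.mono (Set.Icc_subset_Icc haa' hb'b)
    refine ⟨a', b', haa', hab', hb'b, ?_⟩
    apply Set.Subset.antisymm
    · rintro w ⟨x, hx, rfl⟩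
      constructor
      · by_contra hlt
        push_neg at hlt
        have hxa : x ≠ a' := fun h => by rw [h, hfa'] at hlt; exact absurd hlt (lt_irrefl _)
        have hxa' : a' < x := lt_of_le_of_ne hx.1 (Ne.symm hxa)
        have : k₁ ∈ f '' Set.Icc x b' := by
          apply intermediate_value_Icc hx.2 (hcont.mono (Set.Icc_subset_Icc (haa'.trans hxa'.le) hb'b))
          exact ⟨hlt.le, by rw [hfb']; exact hk⟩
        obtain ⟨t, ht, hft⟩ := this
        have htS : t ∈ S₁ := ⟨⟨ha'mem.1.1.trans (hxa'.le.trans ht.1),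
          ht.2.trans hb'mem.1.2⟩, hft⟩
        have : t ≤ a' := le_csSup hS₁bdd htS
        exact absurd (lt_of_lt_of_le hxa' (le_trans ht.1 this)) (lt_irrefl _)
      · by_contra hlt
        push_neg at hlt
        have hxb : x ≠ b' := fun h => by rw [h, hfb'] at hlt; exact absurd hlt (lt_irrefl _)
        have hxb' : x < b' := lt_of_le_of_ne hx.2 hxb
        have : k₂ ∈ f '' Set.Icc a' x := by
          apply intermediate_value_Icc hx.1 (hcont.mono (Set.Icc_subset_Icc haa' (hxb'.le.trans hb'b)))
          exact ⟨by rw [hfa']; exact hk, hlt.le⟩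
        obtain ⟨t, ht, hft⟩ := this
        have htS : t ∈ S₂ := ⟨⟨ht.1, (ht.2.trans hxb'.le).trans hb'mem.1.2⟩, hft⟩
        have : b' ≤ t := csInf_le hS₂bdd htS
        exact absurd (lt_of_le_of_lt (this.trans ht.2) hxb') (lt_irrefl _)
    · intro w hw
      have := intermediate_value_Icc hab' hcont'
      rw [hfa', hfb'] at this
      exact this hw
  · set S₁ : Set ℝ := Set.Icc v₀ u₀ ∩ f ⁻¹' {k₂} with hS₁
    have hS₁c : IsClosed S₁ :=
      (hcont.mono (Set.Icc_subset_Icc hv₀m.1 hu₀m.2)).preimage_isClosed_of_isClosed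
        isClosed_Icc isClosed_singleton
    have hS₁ne : S₁.Nonempty := ⟨v₀, ⟨le_refl _, huv⟩, hv₀⟩
    have hS₁bdd : BddAbove S₁ := (bddAbove_Icc).mono Set.inter_subset_left
    set a' := sSup S₁ with ha'
    have ha'mem : a' ∈ S₁ := hS₁c.csSup_mem hS₁ne hS₁bdd
    have hfa' : f a' = k₂ := ha'mem.2
    have ha'le : a' ≤ u₀ := ha'mem.1.2
    set S₂ : Set ℝ := Set.Icc a' u₀ ∩ f ⁻¹' {k₁} with hS₂
    have hS₂c : IsClosed S₂ :=
      (hcont.mono (Set.Icc_subset_Icc (hv₀m.1.trans ha'mem.1.1) hu₀m.2)).preimage_isClosed_of_isClosed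
        isClosed_Icc isClosed_singleton
    have hS₂ne : S₂.Nonempty := ⟨u₀, ⟨ha'le, le_refl _⟩, hu₀⟩
    have hS₂bdd : BddBelow S₂ := (bddBelow_Icc).mono Set.inter_subset_left
    set b' := sInf S₂ with hb'
    have hb'mem : b' ∈ S₂ := hS₂c.csInf_mem hS₂ne hS₂bdd
    have hfb' : f b' = k₁ := hb'mem.2
    have hab' : a' ≤ b' := hb'mem.1.1
    have haa' : a ≤ a' := hv₀m.1.trans ha'mem.1.1
    have hb'b : b' ≤ b := hb'mem.1.2.trans hu₀m.2
    have hcont' : ContinuousOn f (Set.Icc a' b') := hcont.mono (Set.Icc_subset_Icc haa' hb'b)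
    refine ⟨a', b', haa', hab', hb'b, ?_⟩
    apply Set.Subset.antisymm
    · rintro w ⟨x, hx, rfl⟩
      constructor
      · by_contra hlt
        push_neg at hlt
        have hxb : x ≠ b' := fun h => by rw [h, hfb'] at hlt; exact absurd hlt (lt_irrefl _)
        have hxb' : x < b' := lt_of_le_of_ne hx.2 hxb
        have : k₁ ∈ f '' Set.Icc a' x := by
          apply intermediate_value_Icc' hx.1 (hcont.mono (Set.Icc_subset_Icc haa' (hxb'.le.trans hb'b)))
          exact ⟨hlt.le, by rw [hfa']; exact hk⟩
        obtain ⟨t, ht, hft⟩ := this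
        have htS : t ∈ S₂ := ⟨⟨ht.1, (ht.2.trans hxb'.le).trans hb'mem.1.2⟩, hft⟩
        have : b' ≤ t := csInf_le hS₂bdd htS
        exact absurd (lt_of_le_of_lt (this.trans ht.2) hxb') (lt_irrefl _)
      · by_contra hlt
        push_neg at hlt
        have hxa : x ≠ a' := fun h => by rw [h, hfa'] at hlt; exact absurd hlt (lt_irrefl _)
        have hxa' : a' < x := lt_of_le_of_ne hx.1 (Ne.symm hxa)
        have : k₂ ∈ f '' Set.Icc x b' := by
          apply intermediate_value_Icc' hx.2 (hcont.mono (Set.Icc_subset_Icc (haa'.trans hxa'.le) hb'b))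
          exact ⟨by rw [hfb']; exact hk, hlt.le⟩
        obtain ⟨t, ht, hft⟩ := this
        have htS : t ∈ S₁ := ⟨⟨ha'mem.1.1.trans (hxa'.le.trans ht.1),
          ht.2.trans hb'mem.1.2⟩, hft⟩
        have : t ≤ a' := le_csSup hS₁bdd htS
        exact absurd (lt_of_lt_of_le hxa' (le_trans ht.1 this)) (lt_irrefl _)
    · intro w hw
      have := intermediate_value_Icc' hab' hcont'
      rw [hfa', hfb'] at this
      exact this hw

/-- A loop of interval coverings is realized by a periodic-type point with itinerary. -/
lemma realize_loop (hAB : A ≤ B) (hf : ContinuousOn f (Set.Icc A B))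
    (hmap : Set.MapsTo f (Set.Icc A B) (Set.Icc A B))
    (n : ℕ) (hn : 0 < n) (J : ℕ → ℝ × ℝ)
    (hsub : ∀ i ≤ n, Set.uIcc (J i).1 (J i).2 ⊆ Set.Icc A B)
    (hcov : ∀ i < n, Set.uIcc (J (i+1)).1 (J (i+1)).2 ⊆ f '' Set.uIcc (J i).1 (J i).2)
    (hloop : J n = J 0) :
    ∃ x, f^[n] x = x ∧ ∀ i ≤ n, f^[i] x ∈ Set.uIcc (J i).1 (J i).2 := by
  have claim : ∀ j, j ≤ n → ∃ a' b', a' ≤ b' ∧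
      Set.Icc a' b' ⊆ Set.uIcc (J (n-j)).1 (J (n-j)).2 ∧
      (∀ t ∈ Set.Icc a' b', ∀ l, l ≤ j → f^[l] t ∈ Set.uIcc (J (n-j+l)).1 (J (n-j+l)).2) ∧
      (∃ α ∈ Set.Icc a' b', f^[j] α = min (J n).1 (J n).2) ∧
      (∃ β ∈ Set.Icc a' b', f^[j] β = max (J n).1 (J n).2) := by
    intro j
    induction j with
    | zero =>
      intro _
      refine ⟨min (J n).1 (J n).2, max (J n).1 (J n).2, min_le_max, ?_, ?_, ?_, ?_⟩
      · simp [uIcc_eq_Icc_minmax]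
      · intro t ht l hl
        interval_cases l
        simpa [uIcc_eq_Icc_minmax] using ht
      · exact ⟨min (J n).1 (J n).2, Set.left_mem_Icc.2 min_le_max, rfl⟩
      · exact ⟨max (J n).1 (J n).2, Set.right_mem_Icc.2 min_le_max, rfl⟩
    | succ j ih =>
      intro hj
      obtain ⟨a', b', hab', hsub', hitin, ⟨α', hα'm, hα'⟩, ⟨β', hβ'm, hβ'⟩⟩ :=
        ih (le_of_lt (Nat.lt_of_succ_le hj))
      set i := n - (j+1) with hi
      have hidx : n - j = i + 1 := by omega
      have hin : i < n := by omega
      have hJi : Set.uIcc (J i).1 (J i).2 = Set.Icc (min (J i).1 (J i).2) (max (J i).1 (J i).2) :=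
        uIcc_eq_Icc_minmax _ _
      have hcovi := hcov i hin
      have htgt : Set.Icc a' b' ⊆ f '' Set.Icc (min (J i).1 (J i).2) (max (J i).1 (J i).2) := by
        rw [← hJi]
        refine Set.Subset.trans ?_ hcovi
        rw [← hidx] at *
        exact hsub'
      have hcnt : ContinuousOn f (Set.Icc (min (J i).1 (J i).2) (max (J i).1 (J i).2)) := by
        rw [← hJi]; exact hf.mono (hsub i (le_of_lt hin))
      obtain ⟨a'', b'', h1, h2, h3, h4⟩ := interval_pullback (f := f) hab' hcnt htgt
      refine ⟨a'', b'', h2, ?_, ?_, ?_, ?_⟩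
      · rw [hJi]; exact Set.Icc_subset_Icc h1 h3
      · intro t ht l hl
        match l with
        | 0 =>
          have : t ∈ Set.uIcc (J i).1 (J i).2 := by
            rw [hJi]; exact Set.Icc_subset_Icc h1 h3 ht
          simpa using this
        | Nat.succ l =>
          have hft : f t ∈ Set.Icc a' b' := by
            rw [← h4]; exact Set.mem_image_of_mem f ht
          have hl' : l ≤ j := by omega
          have := hitin (f t) hft l hl'
          have heq : n - j + l = n - (j+1) + (l+1) := by omega
          rw [heq] at this
          simpa [Function.iterate_succ_apply] using this
      · have : α' ∈ f '' Set.Icc a'' b'' := by rw [h4]; exact hα'm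
        obtain ⟨α, hαm, hfα⟩ := this
        exact ⟨α, hαm, by rw [Function.iterate_succ_apply, hfα, hα']⟩
      · have : β' ∈ f '' Set.Icc a'' b'' := by rw [h4]; exact hβ'm
        obtain ⟨β, hβm, hfβ⟩ := this
        exact ⟨β, hβm, by rw [Function.iterate_succ_apply, hfβ, hβ']⟩
  obtain ⟨a', b', hab', hsub', hitin, ⟨α, hαm, hα⟩, ⟨β, hβm, hβ⟩⟩ := claim n (le_refl n)
  rw [Nat.sub_self] at hsub'
  have hitin' : ∀ t ∈ Set.Icc a' b', ∀ l ≤ n, f^[l] t ∈ Set.uIcc (J l).1 (J l).2 := by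
    intro t ht l hl
    have := hitin t ht l hl
    rwa [Nat.sub_self, Nat.zero_add] at this
  rw [hloop] at hα hβ
  have hIccAB : Set.Icc a' b' ⊆ Set.Icc A B := hsub'.trans (hsub 0 (Nat.zero_le n))
  have hαlo : min (J 0).1 (J 0).2 ≤ α := ((uIcc_eq_Icc_minmax _ _) ▸ hsub' hαm).1
  have hβhi : β ≤ max (J 0).1 (J 0).2 := ((uIcc_eq_Icc_minmax _ _) ▸ hsub' hβm).2
  have huab : Set.uIcc α β ⊆ Set.Icc a' b' := by
    rw [← Set.uIcc_of_le hab']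
    exact Set.uIcc_subset_uIcc (by rwa [Set.uIcc_of_le hab']) (by rwa [Set.uIcc_of_le hab'])
  set g : ℝ → ℝ := fun x => f^[n] x - x with hg
  have hgcont : ContinuousOn g (Set.uIcc α β) :=
    ((contOn_iterate hf hmap n).mono (huab.trans hIccAB)).sub
      (continuousOn_id.mono (huab.trans hIccAB))
  have h0mem : (0:ℝ) ∈ Set.uIcc (g α) (g β) := by
    rw [Set.mem_uIcc]
    left
    constructor
    · simp only [hg]; rw [hα]; linarith
    · simp only [hg]; rw [hβ]; linarith
  obtain ⟨x, hxm, hgx⟩ := intermediate_value_uIcc hgcont h0mem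
  refine ⟨x, ?_, ?_⟩
  · simp only [hg] at hgx; linarith
  · intro i hi
    exact hitin' x (huab hxm) i hi

/-- No odd covering loop of length `< m` containing two disjoint intervals can exist. -/
lemma no_bad_loop (hAB : A ≤ B) (hf : ContinuousOn f (Set.Icc A B))
    (hmap : Set.MapsTo f (Set.Icc A B) (Set.Icc A B)) {m : ℕ}
    (hno : ∀ k : ℕ, Odd k → 1 < k → k < m → ∀ p ∈ Set.Icc A B, ¬ LeastPeriod f p k)
    (n : ℕ) (hodd : Odd n) (h1 : 1 < n) (hnm : n < m) (J : ℕ → ℝ × ℝ)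
    (hsub : ∀ i ≤ n, Set.uIcc (J i).1 (J i).2 ⊆ Set.Icc A B)
    (hcov : ∀ i < n, Set.uIcc (J (i+1)).1 (J (i+1)).2 ⊆ f '' Set.uIcc (J i).1 (J i).2)
    (hloop : J n = J 0) (i₀ j₀ : ℕ) (hi₀ : i₀ ≤ n) (hj₀ : j₀ ≤ n)
    (hdisj : Set.uIcc (J i₀).1 (J i₀).2 ∩ Set.uIcc (J j₀).1 (J j₀).2 = ∅) : False := by
  obtain ⟨x, hx1, hitin⟩ := realize_loop hAB hf hmap n (by omega) J hsub hcov hloop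
  have hxmem : x ∈ Set.Icc A B := by
    have := hitin 0 (Nat.zero_le n)
    simpa using hsub 0 (Nat.zero_le n) this
  have hper : Function.IsPeriodicPt f n x := hx1
  set d := Function.minimalPeriod f x with hd
  have hd_dvd : d ∣ n := hper.minimalPeriod_dvd
  have hd_pos : 0 < d := hper.minimalPeriod_pos (by omega)
  have hd_le : d ≤ n := Nat.le_of_dvd (by omega) hd_dvd
  have hd_odd : Odd d := by
    rcases Nat.even_or_odd d with he | ho
    · exfalso
      have : (2:ℕ) ∣ n := dvd_trans (even_iff_two_dvd.mp he) hd_dvd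
      rw [Nat.odd_iff] at hodd
      omega
    · exact ho
  have hd_ne1 : d ≠ 1 := by
    intro hd1
    have hfix : f x = x := by
      have := Function.iterate_minimalPeriod (f := f) (x := x)
      rw [← hd, hd1] at this
      simpa using this
    have hall : ∀ l : ℕ, f^[l] x = x := by
      intro l
      induction l with
      | zero => rfl
      | succ l ih => rw [Function.iterate_succ_apply', ih, hfix]
    have hm1 : x ∈ Set.uIcc (J i₀).1 (J i₀).2 := by
      have := hitin i₀ hi₀; rwa [hall i₀] at this
    have hm2 : x ∈ Set.uIcc (J j₀).1 (J j₀).2 := by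
      have := hitin j₀ hj₀; rwa [hall j₀] at this
    have : x ∈ Set.uIcc (J i₀).1 (J i₀).2 ∩ Set.uIcc (J j₀).1 (J j₀).2 := ⟨hm1, hm2⟩
    rw [hdisj] at this
    exact this
  have hleast : LeastPeriod f x d := by
    constructor
    · exact Function.iterate_minimalPeriod
    · intro i hi0 hid hfix
      have : d ≤ i := Function.IsPeriodicPt.minimalPeriod_le hi0 hfix
      omega
  exact hno d hd_odd (by omega) (by omega) x hxmem hleast

/-- Criterion: two spikes above `v` with a strict dip below `u` in between imply
strict turbulence. -/
lemma crit_up {g : ℝ → ℝ} (hg : ContinuousOn g (Set.Icc A B)) {u e v : ℝ}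
    (hu : u ∈ Set.Icc A B) (hv : v ∈ Set.Icc A B)
    (h1 : u < e) (h2 : e < v)
    (hgu : v ≤ g u) (hgv : v ≤ g v) (hge : g e < u) :
    StrictlyTurbulent g (Set.Icc A B) := by
  have huv : u < v := h1.trans h2
  have hsubuv : Set.Icc u v ⊆ Set.Icc A B := Set.Icc_subset_Icc hu.1 hv.2
  have hsubue : Set.Icc u e ⊆ Set.Icc A B := Set.Icc_subset_Icc hu.1 (h2.le.trans hv.2)
  have hsubev : Set.Icc e v ⊆ Set.Icc A B := Set.Icc_subset_Icc (hu.1.trans h1.le) hv.2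
  set S₀ : Set ℝ := Set.Icc u e ∩ g ⁻¹' (Set.Ici v) with hS₀
  have hS₀c : IsClosed S₀ := (hg.mono hsubue).preimage_isClosed_of_isClosed isClosed_Icc isClosed_Ici
  have hS₀ne : S₀.Nonempty := ⟨u, ⟨le_refl _, h1.le⟩, hgu⟩
  have hS₀bdd : BddAbove S₀ := bddAbove_Icc.mono Set.inter_subset_left
  set c₀ := sSup S₀ with hc₀def
  have hc₀m : c₀ ∈ S₀ := hS₀c.csSup_mem hS₀ne hS₀bdd
  have hgc₀ : v ≤ g c₀ := hc₀m.2
  have hc₀e : c₀ < e := lt_of_le_of_ne hc₀m.1.2 (fun h => by rw [h] at hgc₀; linarith)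
  have hc₀u : u ≤ c₀ := hc₀m.1.1
  set μ := (g e + u) / 2 with hμdef
  have hμ1 : g e < μ := by simp only [hμdef]; linarith
  have hμ2 : μ < u := by simp only [hμdef]; linarith
  have ht₀ex : μ ∈ g '' Set.Icc c₀ e := by
    apply intermediate_value_Icc' hc₀e.le
      (hg.mono (Set.Icc_subset_Icc (hu.1.trans hc₀u) (h2.le.trans hv.2)))
    exact ⟨hμ1.le, by linarith⟩
  obtain ⟨t₀, ht₀m, hgt₀⟩ := ht₀ex
  have ht₀e : t₀ < e := lt_of_le_of_ne ht₀m.2 (fun h => by rw [h] at hgt₀; linarith)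
  set S₁ : Set ℝ := Set.Icc c₀ e ∩ g ⁻¹' (Set.Iic u) with hS₁def
  have hS₁c : IsClosed S₁ :=
    (hg.mono (Set.Icc_subset_Icc (hu.1.trans hc₀u) (h2.le.trans hv.2))).preimage_isClosed_of_isClosed
      isClosed_Icc isClosed_Iic
  have hS₁ne : S₁.Nonempty := ⟨t₀, ht₀m, by rw [Set.mem_preimage, hgt₀]; exact Set.mem_Iic.2 hμ2.le⟩
  have hS₁bdd : BddBelow S₁ := bddBelow_Icc.mono Set.inter_subset_left
  set d₀ := sInf S₁ with hd₀def
  have hd₀m : d₀ ∈ S₁ := hS₁c.csInf_mem hS₁ne hS₁bdd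
  have hgd₀ : g d₀ ≤ u := hd₀m.2
  have hd₀t₀ : d₀ ≤ t₀ := csInf_le hS₁bdd ⟨ht₀m, by rw [Set.mem_preimage, hgt₀]; exact hμ2.le⟩
  have hd₀e : d₀ < e := lt_of_le_of_lt hd₀t₀ ht₀e
  have hc₀d₀ : c₀ < d₀ := lt_of_le_of_ne hd₀m.1.1 (fun h => by rw [← h] at hgd₀; linarith)
  set S₂ : Set ℝ := Set.Icc e v ∩ g ⁻¹' (Set.Ici v) with hS₂def
  have hS₂c : IsClosed S₂ := (hg.mono hsubev).preimage_isClosed_of_isClosed isClosed_Icc isClosed_Ici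
  have hS₂ne : S₂.Nonempty := ⟨v, ⟨h2.le, le_refl _⟩, hgv⟩
  have hS₂bdd : BddBelow S₂ := bddBelow_Icc.mono Set.inter_subset_left
  set d₁ := sInf S₂ with hd₁def
  have hd₁m : d₁ ∈ S₂ := hS₂c.csInf_mem hS₂ne hS₂bdd
  have hgd₁ : v ≤ g d₁ := hd₁m.2
  have hed₁ : e < d₁ := lt_of_le_of_ne hd₁m.1.1 (fun h => by rw [← h] at hgd₁; linarith)
  have ht₁ex : μ ∈ g '' Set.Icc e d₁ := by
    apply intermediate_value_Icc hed₁.le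
      (hg.mono (Set.Icc_subset_Icc (hu.1.trans h1.le) (hd₁m.1.2.trans hv.2)))
    exact ⟨hμ1.le, by linarith⟩
  obtain ⟨t₁, ht₁m, hgt₁⟩ := ht₁ex
  have het₁ : e < t₁ := lt_of_le_of_ne ht₁m.1 (fun h => by rw [← h] at hgt₁; linarith)
  set S₃ : Set ℝ := Set.Icc e d₁ ∩ g ⁻¹' (Set.Iic u) with hS₃def
  have hS₃c : IsClosed S₃ :=
    (hg.mono (Set.Icc_subset_Icc (hu.1.trans h1.le) (hd₁m.1.2.trans hv.2))).preimage_isClosed_of_isClosed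
      isClosed_Icc isClosed_Iic
  have hS₃ne : S₃.Nonempty := ⟨t₁, ht₁m, by rw [Set.mem_preimage, hgt₁]; exact hμ2.le⟩
  have hS₃bdd : BddAbove S₃ := bddAbove_Icc.mono Set.inter_subset_left
  set c₁ := sSup S₃ with hc₁def
  have hc₁m : c₁ ∈ S₃ := hS₃c.csSup_mem hS₃ne hS₃bdd
  have hgc₁ : g c₁ ≤ u := hc₁m.2
  have hc₁t₁ : t₁ ≤ c₁ := le_csSup hS₃bdd ⟨ht₁m, by rw [Set.mem_preimage, hgt₁]; exact hμ2.le⟩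
  have hec₁ : e < c₁ := lt_of_lt_of_le het₁ hc₁t₁
  have hc₁d₁ : c₁ < d₁ := lt_of_le_of_ne hc₁m.1.2 (fun h => by rw [h] at hgc₁; linarith)
  have him₀ : Set.Icc u v ⊆ g '' Set.Icc c₀ d₀ := by
    have := intermediate_value_Icc' hc₀d₀.le
      (hg.mono (Set.Icc_subset_Icc (hu.1.trans hc₀u) ((hd₀e.le.trans h2.le).trans hv.2)))
    exact Set.Subset.trans (Set.Icc_subset_Icc hgd₀ hgc₀) this
  have him₁ : Set.Icc u v ⊆ g '' Set.Icc c₁ d₁ := by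
    have := intermediate_value_Icc hc₁d₁.le
      (hg.mono (Set.Icc_subset_Icc (hu.1.trans (h1.le.trans hec₁.le)) (hd₁m.1.2.trans hv.2)))
    exact Set.Subset.trans (Set.Icc_subset_Icc hgc₁ hgd₁) this
  have hpos₀ : Set.Icc c₀ d₀ ⊆ Set.Icc u v := Set.Icc_subset_Icc hc₀u (hd₀e.le.trans h2.le)
  have hpos₁ : Set.Icc c₁ d₁ ⊆ Set.Icc u v :=
    Set.Icc_subset_Icc (h1.le.trans hec₁.le) hd₁m.1.2
  refine ⟨c₀, d₀, c₁, d₁, hc₀d₀, hc₁d₁, hpos₀.trans hsubuv, hpos₁.trans hsubuv, ?_, ?_⟩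
  · rw [Set.disjoint_left]
    intro x hx₀ hx₁
    linarith [hx₀.2, hx₁.1, hd₀e, hec₁]
  · intro x hx
    have hxuv : x ∈ Set.Icc u v := by
      rcases hx with hx | hx
      · exact hpos₀ hx
      · exact hpos₁ hx
    exact ⟨him₀ hxuv, him₁ hxuv⟩

/-- Mirror criterion: two dips below `x₁` with a strict spike above `x₂` in between. -/
lemma crit_down {g : ℝ → ℝ} (hg : ContinuousOn g (Set.Icc A B)) {x₁ e x₂ : ℝ}
    (hx₁ : x₁ ∈ Set.Icc A B) (hx₂ : x₂ ∈ Set.Icc A B)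
    (h1 : x₁ < e) (h2 : e < x₂)
    (hg1 : g x₁ ≤ x₁) (hg2 : g x₂ ≤ x₁) (hge : x₂ < g e) :
    StrictlyTurbulent g (Set.Icc A B) := by
  have h12 : x₁ < x₂ := h1.trans h2
  have hsub12 : Set.Icc x₁ x₂ ⊆ Set.Icc A B := Set.Icc_subset_Icc hx₁.1 hx₂.2
  have hsub1e : Set.Icc x₁ e ⊆ Set.Icc A B := Set.Icc_subset_Icc hx₁.1 (h2.le.trans hx₂.2)
  have hsube2 : Set.Icc e x₂ ⊆ Set.Icc A B := Set.Icc_subset_Icc (hx₁.1.trans h1.le) hx₂.2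
  set S₀ : Set ℝ := Set.Icc x₁ e ∩ g ⁻¹' (Set.Iic x₁) with hS₀
  have hS₀c : IsClosed S₀ := (hg.mono hsub1e).preimage_isClosed_of_isClosed isClosed_Icc isClosed_Iic
  have hS₀ne : S₀.Nonempty := ⟨x₁, ⟨le_refl _, h1.le⟩, hg1⟩
  have hS₀bdd : BddAbove S₀ := bddAbove_Icc.mono Set.inter_subset_left
  set c₀ := sSup S₀ with hc₀def
  have hc₀m : c₀ ∈ S₀ := hS₀c.csSup_mem hS₀ne hS₀bdd
  have hgc₀ : g c₀ ≤ x₁ := hc₀m.2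
  have hc₀e : c₀ < e := lt_of_le_of_ne hc₀m.1.2 (fun h => by rw [h] at hgc₀; linarith)
  have hc₀1 : x₁ ≤ c₀ := hc₀m.1.1
  set μ := (x₂ + g e) / 2 with hμdef
  have hμ1 : x₂ < μ := by simp only [hμdef]; linarith
  have hμ2 : μ < g e := by simp only [hμdef]; linarith
  have ht₀ex : μ ∈ g '' Set.Icc c₀ e := by
    apply intermediate_value_Icc hc₀e.le
      (hg.mono (Set.Icc_subset_Icc (hx₁.1.trans hc₀1) (h2.le.trans hx₂.2)))
    exact ⟨by linarith, hμ2.le⟩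
  obtain ⟨t₀, ht₀m, hgt₀⟩ := ht₀ex
  have ht₀e : t₀ < e := lt_of_le_of_ne ht₀m.2 (fun h => by rw [h] at hgt₀; linarith)
  set S₁ : Set ℝ := Set.Icc c₀ e ∩ g ⁻¹' (Set.Ici x₂) with hS₁def
  have hS₁c : IsClosed S₁ :=
    (hg.mono (Set.Icc_subset_Icc (hx₁.1.trans hc₀1) (h2.le.trans hx₂.2))).preimage_isClosed_of_isClosed
      isClosed_Icc isClosed_Ici
  have hS₁ne : S₁.Nonempty := ⟨t₀, ht₀m, by rw [Set.mem_preimage, hgt₀]; exact hμ1.le⟩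
  have hS₁bdd : BddBelow S₁ := bddBelow_Icc.mono Set.inter_subset_left
  set d₀ := sInf S₁ with hd₀def
  have hd₀m : d₀ ∈ S₁ := hS₁c.csInf_mem hS₁ne hS₁bdd
  have hgd₀ : x₂ ≤ g d₀ := hd₀m.2
  have hd₀t₀ : d₀ ≤ t₀ := csInf_le hS₁bdd ⟨ht₀m, by rw [Set.mem_preimage, hgt₀]; exact hμ1.le⟩
  have hd₀e : d₀ < e := lt_of_le_of_lt hd₀t₀ ht₀e
  have hc₀d₀ : c₀ < d₀ := lt_of_le_of_ne hd₀m.1.1 (fun h => by rw [← h] at hgd₀; linarith)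
  set S₂ : Set ℝ := Set.Icc e x₂ ∩ g ⁻¹' (Set.Iic x₁) with hS₂def
  have hS₂c : IsClosed S₂ := (hg.mono hsube2).preimage_isClosed_of_isClosed isClosed_Icc isClosed_Iic
  have hS₂ne : S₂.Nonempty := ⟨x₂, ⟨h2.le, le_refl _⟩, hg2⟩
  have hS₂bdd : BddBelow S₂ := bddBelow_Icc.mono Set.inter_subset_left
  set d₁ := sInf S₂ with hd₁def
  have hd₁m : d₁ ∈ S₂ := hS₂c.csInf_mem hS₂ne hS₂bdd
  have hgd₁ : g d₁ ≤ x₁ := hd₁m.2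
  have hed₁ : e < d₁ := lt_of_le_of_ne hd₁m.1.1 (fun h => by rw [← h] at hgd₁; linarith)
  have ht₁ex : μ ∈ g '' Set.Icc e d₁ := by
    apply intermediate_value_Icc' hed₁.le
      (hg.mono (Set.Icc_subset_Icc (hx₁.1.trans h1.le) (hd₁m.1.2.trans hx₂.2)))
    exact ⟨by linarith, hμ2.le⟩
  obtain ⟨t₁, ht₁m, hgt₁⟩ := ht₁ex
  have het₁ : e < t₁ := lt_of_le_of_ne ht₁m.1 (fun h => by rw [← h] at hgt₁; linarith)
  set S₃ : Set ℝ := Set.Icc e d₁ ∩ g ⁻¹' (Set.Ici x₂) with hS₃def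
  have hS₃c : IsClosed S₃ :=
    (hg.mono (Set.Icc_subset_Icc (hx₁.1.trans h1.le) (hd₁m.1.2.trans hx₂.2))).preimage_isClosed_of_isClosed
      isClosed_Icc isClosed_Ici
  have hS₃ne : S₃.Nonempty := ⟨t₁, ht₁m, by rw [Set.mem_preimage, hgt₁]; exact hμ1.le⟩
  have hS₃bdd : BddAbove S₃ := bddAbove_Icc.mono Set.inter_subset_left
  set c₁ := sSup S₃ with hc₁def
  have hc₁m : c₁ ∈ S₃ := hS₃c.csSup_mem hS₃ne hS₃bdd
  have hgc₁ : x₂ ≤ g c₁ := hc₁m.2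
  have hc₁t₁ : t₁ ≤ c₁ := le_csSup hS₃bdd ⟨ht₁m, by rw [Set.mem_preimage, hgt₁]; exact hμ1.le⟩
  have hec₁ : e < c₁ := lt_of_lt_of_le het₁ hc₁t₁
  have hc₁d₁ : c₁ < d₁ := lt_of_le_of_ne hc₁m.1.2 (fun h => by rw [h] at hgc₁; linarith)
  have him₀ : Set.Icc x₁ x₂ ⊆ g '' Set.Icc c₀ d₀ := by
    have := intermediate_value_Icc hc₀d₀.le
      (hg.mono (Set.Icc_subset_Icc (hx₁.1.trans hc₀1) ((hd₀e.le.trans h2.le).trans hx₂.2)))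
    exact Set.Subset.trans (Set.Icc_subset_Icc hgc₀ hgd₀) this
  have him₁ : Set.Icc x₁ x₂ ⊆ g '' Set.Icc c₁ d₁ := by
    have := intermediate_value_Icc' hc₁d₁.le
      (hg.mono (Set.Icc_subset_Icc (hx₁.1.trans (h1.le.trans hec₁.le)) (hd₁m.1.2.trans hx₂.2)))
    exact Set.Subset.trans (Set.Icc_subset_Icc hgd₁ hgc₁) this
  have hpos₀ : Set.Icc c₀ d₀ ⊆ Set.Icc x₁ x₂ := Set.Icc_subset_Icc hc₀1 (hd₀e.le.trans h2.le)
  have hpos₁ : Set.Icc c₁ d₁ ⊆ Set.Icc x₁ x₂ :=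
    Set.Icc_subset_Icc (h1.le.trans hec₁.le) hd₁m.1.2
  refine ⟨c₀, d₀, c₁, d₁, hc₀d₀, hc₁d₁, hpos₀.trans hsub12, hpos₁.trans hsub12, ?_, ?_⟩
  · rw [Set.disjoint_left]
    intro x hx₀ hx₁'
    linarith [hx₀.2, hx₁'.1, hd₀e, hec₁]
  · intro x hx
    have hxuv : x ∈ Set.Icc x₁ x₂ := by
      rcases hx with hx | hx
      · exact hpos₀ hx
      · exact hpos₁ hx
    exact ⟨him₀ hxuv, him₁ hxuv⟩

/-- Right-side loop: `C₁ → C₂ → ⋯ → C_t → [c,w] → [z,c] → C₁` of odd length `t+2 < m`. -/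
lemma genloop_right (hAB : A ≤ B) (hf : ContinuousOn f (Set.Icc A B))
    (hmap : Set.MapsTo f (Set.Icc A B) (Set.Icc A B)) {m : ℕ}
    (hno : ∀ k : ℕ, Odd k → 1 < k → k < m → ∀ p ∈ Set.Icc A B, ¬ LeastPeriod f p k)
    {b c z w : ℝ} {y : ℕ → ℝ} {t : ℕ}
    (hbz : b < z) (hzc : z < c) (hfz : f z = z) (hfcb : f c ≤ b)
    (hy : ∀ j, f (y j) = y (j+1)) (hy1 : y 1 = b)
    (hyI : ∀ j, y j ∈ Set.Icc A B) (hzI : z ∈ Set.Icc A B) (hcI : c ∈ Set.Icc A B)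
    (hwI : w ∈ Set.Icc A B)
    (hwc : c ≤ w) (hwy : w ≤ y (t+1)) (hfwc : c ≤ f w)
    (ht : 1 ≤ t) (hodd : Odd t) (htm : t + 2 < m) : False := by
  classical
  set n := t + 2 with hn
  set J : ℕ → ℝ × ℝ := fun i =>
    if i < t then (z, y (i+1)) else if i = t then (c, w) else if i = t+1 then (z, c)
    else (z, b) with hJ
  have hJlt : ∀ i, i < t → J i = (z, y (i+1)) := by intro i hi; simp [hJ, hi]
  have hJt : J t = (c, w) := by simp [hJ]
  have hJt1 : J (t+1) = (z, c) := by
    have h1 : ¬ (t+1 < t) := by omega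
    have h2 : ¬ (t+1 = t) := by omega
    simp [hJ, h1, h2]
  have hJt2 : J (t+2) = (z, b) := by
    have h1 : ¬ (t+2 < t) := by omega
    have h2 : ¬ (t+2 = t) := by omega
    have h3 : ¬ (t+2 = t+1) := by omega
    simp [hJ, h1, h2, h3]
  have hbI : b ∈ Set.Icc A B := hy1 ▸ hyI 1
  have hzw : z < w := hzc.trans_le hwc
  have hzyt1 : z < y (t+1) := hzw.trans_le hwy
  have hsub : ∀ i ≤ n, Set.uIcc (J i).1 (J i).2 ⊆ Set.Icc A B := by
    intro i hi
    rcases lt_or_ge i t with h | h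
    · rw [hJlt i h]; exact uIcc_subset_IccAB hAB hzI (hyI (i+1))
    · rcases eq_or_lt_of_le h with h' | h'
      · rw [← h', hJt]; exact uIcc_subset_IccAB hAB hcI hwI
      · rcases Nat.eq_or_lt_of_le h' with h'' | h''
        · rw [← h'', hJt1]; exact uIcc_subset_IccAB hAB hzI hcI
        · have : i = t + 2 := by omega
          rw [this, hJt2]; exact uIcc_subset_IccAB hAB hzI hbI
  have hcov : ∀ i < n, Set.uIcc (J (i+1)).1 (J (i+1)).2 ⊆ f '' Set.uIcc (J i).1 (J i).2 := by
    intro i hi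
    rcases lt_or_ge (i+1) t with h | h
    · have hit : i < t := by omega
      rw [hJlt i hit, hJlt (i+1) h]
      have := intermediate_value_uIcc (hf.mono (uIcc_subset_IccAB hAB hzI (hyI (i+1))))
      rw [hfz, hy (i+1)] at this
      exact this
    · rcases eq_or_lt_of_le h with h' | h'
      · have hit : i < t := by omega
        rw [hJlt i hit, ← h', hJt]
        dsimp only
        have him := intermediate_value_uIcc (hf.mono (uIcc_subset_IccAB hAB hzI (hyI (i+1))))
        rw [hfz, hy (i+1)] at him
        rw [← h'] at him
        refine Set.Subset.trans ?_ him
        rw [Set.uIcc_of_le hwc, Set.uIcc_of_le hzyt1.le]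
        exact Set.Icc_subset_Icc (hzc.le) hwy
      · rcases Nat.eq_or_lt_of_le h' with h'' | h''
        · have hit : i = t := by omega
          rw [hit, hJt, hJt1]
          dsimp only
          have him := intermediate_value_uIcc (hf.mono (uIcc_subset_IccAB hAB hcI hwI))
          refine Set.Subset.trans ?_ him
          rw [Set.uIcc_of_le hzc.le]
          have h4 : f c ≤ f w := by linarith
          rw [Set.uIcc_of_le h4]
          exact Set.Icc_subset_Icc (by linarith) hfwc
        · have hit : i = t + 1 := by omega
          rw [hit, hJt1, hJt2]
          dsimp only
          have him := intermediate_value_uIcc (hf.mono (uIcc_subset_IccAB hAB hzI hcI))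
          rw [hfz] at him
          refine Set.Subset.trans ?_ him
          rw [Set.uIcc_of_ge hbz.le, Set.uIcc_of_ge (by linarith : f c ≤ z)]
          exact Set.Icc_subset_Icc hfcb (le_refl _)
  have hloop : J n = J 0 := by
    rw [hn, hJt2, hJlt 0 (by omega), hy1]
  have hdisj : Set.uIcc (J 0).1 (J 0).2 ∩ Set.uIcc (J t).1 (J t).2 = ∅ := by
    rw [hJlt 0 (by omega), hJt, hy1]
    dsimp only
    rw [Set.eq_empty_iff_forall_notMem]
    rintro x ⟨hx1, hx2⟩
    rw [Set.uIcc_of_ge hbz.le] at hx1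
    rw [Set.uIcc_of_le hwc] at hx2
    have := hx1.2
    have := hx2.1
    linarith
  have hoddn : Odd n := by
    obtain ⟨s, hs⟩ := hodd
    exact ⟨s + 1, by omega⟩
  exact no_bad_loop hAB hf hmap hno n hoddn (by omega) (by omega) J hsub hcov hloop
    0 t (by omega) (by omega) hdisj

/-- Left-side loop: `C₁ → C₂ → ⋯ → C_t → [w,b] → C₁` of odd length `t+1 < m`. -/
lemma genloop_left (hAB : A ≤ B) (hf : ContinuousOn f (Set.Icc A B))
    (hmap : Set.MapsTo f (Set.Icc A B) (Set.Icc A B)) {m : ℕ}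
    (hno : ∀ k : ℕ, Odd k → 1 < k → k < m → ∀ p ∈ Set.Icc A B, ¬ LeastPeriod f p k)
    {b z w : ℝ} {y : ℕ → ℝ} {t : ℕ}
    (hbz : b < z) (hfz : f z = z) (hzy2 : z < y 2)
    (hy : ∀ j, f (y j) = y (j+1)) (hy1 : y 1 = b)
    (hyI : ∀ j, y j ∈ Set.Icc A B) (hzI : z ∈ Set.Icc A B) (hwI : w ∈ Set.Icc A B)
    (hwy : y (t+1) ≤ w) (hwb : w ≤ b) (hfwb : f w ≤ b)
    (ht : 2 ≤ t) (hodd : Odd (t+1)) (htm : t + 1 < m) : False := by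
  classical
  set n := t + 1 with hn
  set J : ℕ → ℝ × ℝ := fun i =>
    if i < t then (z, y (i+1)) else if i = t then (w, b) else (z, b) with hJ
  have hJlt : ∀ i, i < t → J i = (z, y (i+1)) := by intro i hi; simp [hJ, hi]
  have hJt : J t = (w, b) := by simp [hJ]
  have hJt1 : J (t+1) = (z, b) := by
    have h1 : ¬ (t+1 < t) := by omega
    have h2 : ¬ (t+1 = t) := by omega
    simp [hJ, h1, h2]
  have hbI : b ∈ Set.Icc A B := hy1 ▸ hyI 1
  have hyt1b : y (t+1) ≤ b := hwy.trans hwb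
  have hfb : f b = y 2 := by rw [← hy1, hy 1]
  have hsub : ∀ i ≤ n, Set.uIcc (J i).1 (J i).2 ⊆ Set.Icc A B := by
    intro i hi
    rcases lt_or_ge i t with h | h
    · rw [hJlt i h]; exact uIcc_subset_IccAB hAB hzI (hyI (i+1))
    · rcases eq_or_lt_of_le h with h' | h'
      · rw [← h', hJt]; exact uIcc_subset_IccAB hAB hwI hbI
      · have : i = t + 1 := by omega
        rw [this, hJt1]; exact uIcc_subset_IccAB hAB hzI hbI
  have hcov : ∀ i < n, Set.uIcc (J (i+1)).1 (J (i+1)).2 ⊆ f '' Set.uIcc (J i).1 (J i).2 := by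
    intro i hi
    rcases lt_or_ge (i+1) t with h | h
    · have hit : i < t := by omega
      rw [hJlt i hit, hJlt (i+1) h]
      have := intermediate_value_uIcc (hf.mono (uIcc_subset_IccAB hAB hzI (hyI (i+1))))
      rw [hfz, hy (i+1)] at this
      exact this
    · rcases eq_or_lt_of_le h with h' | h'
      · have hit : i < t := by omega
        rw [hJlt i hit, ← h', hJt]
        dsimp only
        have him := intermediate_value_uIcc (hf.mono (uIcc_subset_IccAB hAB hzI (hyI (i+1))))
        rw [hfz, hy (i+1)] at him
        rw [← h'] at him
        refine Set.Subset.trans ?_ him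
        rw [Set.uIcc_of_le hwb, Set.uIcc_of_ge (by linarith : y (t+1) ≤ z)]
        exact Set.Icc_subset_Icc hwy (by linarith)
      · have hit : i = t := by omega
        rw [hit, hJt, hJt1]
        dsimp only
        have him := intermediate_value_uIcc (hf.mono (uIcc_subset_IccAB hAB hwI hbI))
        refine Set.Subset.trans ?_ him
        rw [Set.uIcc_of_ge hbz.le]
        rw [hfb]
        rw [Set.uIcc_of_le (by linarith : f w ≤ y 2)]
        exact Set.Icc_subset_Icc hfwb (by linarith)
  have hloop : J n = J 0 := by
    rw [hn, hJt1, hJlt 0 (by omega), hy1]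
  have hdisj : Set.uIcc (J 1).1 (J 1).2 ∩ Set.uIcc (J t).1 (J t).2 = ∅ := by
    rw [hJlt 1 (by omega), hJt]
    dsimp only
    rw [Set.eq_empty_iff_forall_notMem]
    rintro x ⟨hx1, hx2⟩
    rw [Set.uIcc_of_le hzy2.le] at hx1
    rw [Set.uIcc_of_le hwb] at hx2
    have := hx1.1
    have := hx2.2
    linarith
  exact no_bad_loop hAB hf hmap hno n hodd (by omega) (by omega) J hsub hcov hloop
    1 t (by omega) (by omega) hdisj

end TurbAux

set_option maxHeartbeats 4000000 in
/-- part of Theorem 4 of the paper. If `f` has a periodic point of odd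
least period `m ≥ 3` and no periodic point of odd least period `k` with `1 < k < m`,
then `f²` is strictly turbulent. -/
theorem iterate_two_strictly_turbulent_of_least_odd_period
    (A B : ℝ) (hAB : A ≤ B) (f : ℝ → ℝ)
    (hf : ContinuousOn f (Set.Icc A B))
    (hmap : Set.MapsTo f (Set.Icc A B) (Set.Icc A B))
    (m : ℕ) (hm3 : 3 ≤ m) (hmodd : Odd m)
    (hex : ∃ p ∈ Set.Icc A B, LeastPeriod f p m)
    (hno : ∀ k : ℕ, Odd k → 1 < k → k < m → ∀ p ∈ Set.Icc A B, ¬ LeastPeriod f p k) :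
    StrictlyTurbulent (f^[2]) (Set.Icc A B) := by
  classical
  obtain ⟨p₀, hp₀mem, hp₀per, hp₀min⟩ := hex
  obtain ⟨am, ham⟩ := hmodd
  -- all iterates stay in the interval
  have horb : ∀ i : ℕ, f^[i] p₀ ∈ Set.Icc A B := fun i => (hmap.iterate i) hp₀mem
  -- reduce iterates mod m
  have hmod : ∀ i : ℕ, f^[i] p₀ = f^[i % m] p₀ := by
    intro i
    induction i using Nat.strong_induction_on with
    | _ i ih =>
      rcases lt_or_ge i m with h | h
      · rw [Nat.mod_eq_of_lt h]
      · have h1 : i = (i - m) + m := by omega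
        have h2 : f^[i] p₀ = f^[i - m] p₀ := by
          conv_lhs => rw [h1]
          rw [Function.iterate_add_apply, hp₀per]
        rw [h2, ih (i - m) (by omega), Nat.mod_eq_sub_mod h]
  -- the orbit as a finite set
  set P : Finset ℝ := (Finset.range m).image (fun i => f^[i] p₀) with hPdef
  have hPmem : ∀ x, x ∈ P ↔ ∃ i, i < m ∧ f^[i] p₀ = x := by
    intro x
    simp [hPdef, Finset.mem_image, Finset.mem_range]
  have hPne : P.Nonempty := ⟨p₀, (hPmem p₀).2 ⟨0, by omega, rfl⟩⟩
  have hPIcc : ∀ x ∈ P, x ∈ Set.Icc A B := by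
    intro x hx
    obtain ⟨i, _, rfl⟩ := (hPmem x).1 hx
    exact horb i
  have hPmap : ∀ x ∈ P, f x ∈ P := by
    intro x hx
    obtain ⟨i, hi, rfl⟩ := (hPmem x).1 hx
    refine (hPmem _).2 ⟨(i+1) % m, Nat.mod_lt _ (by omega), ?_⟩
    rw [← hmod, Function.iterate_succ_apply']
  have hPnofix : ∀ x ∈ P, f x ≠ x := by
    intro x hx hfx
    obtain ⟨i, hi, rfl⟩ := (hPmem x).1 hx
    have hfixed : Function.IsFixedPt f (f^[i] p₀) := hfx
    have h1 : f^[m - i] (f^[i] p₀) = f^[i] p₀ := hfixed.iterate (m - i)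
    rw [← Function.iterate_add_apply] at h1
    have h2 : m - i + i = m := by omega
    rw [h2, hp₀per] at h1
    -- p₀ = f^[i] p₀, which is fixed, so f p₀ = p₀
    have h3 : f p₀ = p₀ := by
      conv_lhs => rw [h1]
      conv_rhs => rw [h1]
      exact hfx
    exact hp₀min 1 (by omega) (by omega) (by simpa using h3)
  -- the point b : max of the points moving right
  set Smov : Finset ℝ := P.filter (fun x => x < f x) with hSmov
  have hSmovne : Smov.Nonempty := by
    set x₀ := P.min' hPne with hx₀
    have hx₀P : x₀ ∈ P := P.min'_mem hPne
    refine ⟨x₀, Finset.mem_filter.2 ⟨hx₀P, ?_⟩⟩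
    exact lt_of_le_of_ne (P.min'_le _ (hPmap x₀ hx₀P)) (Ne.symm (hPnofix x₀ hx₀P))
  set b := Smov.max' hSmovne with hbdef
  have hbmem : b ∈ Smov := Smov.max'_mem hSmovne
  have hbP : b ∈ P := (Finset.mem_filter.1 hbmem).1
  have hbf : b < f b := (Finset.mem_filter.1 hbmem).2
  have hright : ∀ x ∈ P, b < x → f x < x := by
    intro x hx hbx
    rcases lt_trichotomy (f x) x with h | h | h
    · exact h
    · exact absurd h (hPnofix x hx)
    · have hxS : x ∈ Smov := Finset.mem_filter.2 ⟨hx, h⟩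
      have hxb : x ≤ b := Smov.le_max' x hxS
      linarith
  -- c : the next orbit point above b
  set T : Finset ℝ := P.filter (fun x => b < x) with hTdef
  have hTne : T.Nonempty := by
    set x₁ := P.max' hPne with hx₁
    have hx₁P : x₁ ∈ P := P.max'_mem hPne
    refine ⟨x₁, Finset.mem_filter.2 ⟨hx₁P, ?_⟩⟩
    have h1 : b ≤ x₁ := P.le_max' b hbP
    rcases eq_or_lt_of_le h1 with h2 | h2
    · exfalso
      have := hbf
      rw [h2] at this
      have h3 : f x₁ ≤ x₁ := P.le_max' _ (hPmap x₁ hx₁P)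
      linarith
    · exact h2
  set c := T.min' hTne with hcdef
  have hcmem : c ∈ T := T.min'_mem hTne
  have hcP : c ∈ P := (Finset.mem_filter.1 hcmem).1
  have hbc : b < c := (Finset.mem_filter.1 hcmem).2
  have hcmin : ∀ x ∈ P, b < x → c ≤ x := by
    intro x hx hbx
    exact T.min'_le x (Finset.mem_filter.2 ⟨hx, hbx⟩)
  have hfc : f c < c := hright c hcP hbc
  have hfcb : f c ≤ b := by
    by_contra hcon
    push_neg at hcon
    have := hcmin (f c) (hPmap c hcP) hcon
    linarith
  have hfbc : c ≤ f b := hcmin (f b) (hPmap b hbP) hbf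
  have hgap : ∀ x ∈ P, x ≤ b ∨ c ≤ x := by
    intro x hx
    rcases le_or_gt x b with h | h
    · exact Or.inl h
    · exact Or.inr (hcmin x hx h)
  have hbI : b ∈ Set.Icc A B := hPIcc b hbP
  have hcI : c ∈ Set.Icc A B := hPIcc c hcP
  clear_value P Smov b T c
  clear hbdef hcdef hSmov hTdef hPdef hbmem hcmem
  -- the fixed point z between b and c
  obtain ⟨z, hzm, hzval⟩ : ∃ z ∈ Set.Icc b c, f z - z = 0 := by
    have hcont : ContinuousOn (fun x => f x - x) (Set.Icc b c) :=
      (hf.mono (Set.Icc_subset_Icc hbI.1 hcI.2)).sub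
        (continuousOn_id.mono (Set.Icc_subset_Icc hbI.1 hcI.2))
    have := intermediate_value_Icc' hbc.le hcont
    have h0 : (0:ℝ) ∈ Set.Icc (f c - c) (f b - b) := ⟨by linarith, by linarith⟩
    obtain ⟨z, hz1, hz2⟩ := this h0
    exact ⟨z, hz1, hz2⟩
  have hfz : f z = z := by linarith
  have hbz : b < z := lt_of_le_of_ne hzm.1 (fun h => by rw [← h] at hfz; linarith)
  have hzc : z < c := lt_of_le_of_ne hzm.2 (fun h => by rw [h] at hfz; linarith)
  have hzI : z ∈ Set.Icc A B := ⟨hbI.1.trans hzm.1, hzm.2.trans hcI.2⟩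
  -- b is a periodic point of least period m
  obtain ⟨s, hsm, hsb⟩ : ∃ s, s < m ∧ f^[s] p₀ = b := by
    obtain ⟨s, hs1, hs2⟩ := (hPmem b).1 hbP
    exact ⟨s, hs1, hs2⟩
  have hbm : f^[m] b = b := by
    rw [← hsb, ← Function.iterate_add_apply]
    have h1 : m + s = s + m := by omega
    rw [h1, Function.iterate_add_apply, hp₀per]
  have hbleast : ∀ i, 0 < i → i < m → f^[i] b ≠ b := by
    intro i hi0 him hib
    have h1 : f^[i + s] p₀ = f^[s] p₀ := by
      rw [Function.iterate_add_apply, hsb, hib]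
    have h2 : f^[m - s] (f^[i+s] p₀) = f^[m - s] (f^[s] p₀) := by rw [h1]
    rw [← Function.iterate_add_apply, ← Function.iterate_add_apply] at h2
    have e1 : m - s + (i + s) = i + m := by omega
    have e2 : m - s + s = m := by omega
    rw [e1, e2, hp₀per, Function.iterate_add_apply, hp₀per] at h2
    exact hp₀min i hi0 him h2
  have hbmod : ∀ i : ℕ, f^[i] b = f^[i % m] b := by
    intro i
    induction i using Nat.strong_induction_on with
    | _ i ih =>
      rcases lt_or_ge i m with h | h
      · rw [Nat.mod_eq_of_lt h]
      · have h1 : i = (i - m) + m := by omega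
        have h2 : f^[i] b = f^[i - m] b := by
          conv_lhs => rw [h1]
          rw [Function.iterate_add_apply, hbm]
        rw [h2, ih (i - m) (by omega), Nat.mod_eq_sub_mod h]
  -- the itinerary sequence from b
  set y : ℕ → ℝ := fun j => f^[(j + (m-1)) % m] b with hydef
  have hy1 : y 1 = b := by
    have e1 : 1 + (m-1) = m := by omega
    simp only [hydef, e1, Nat.mod_self, Function.iterate_zero_apply]
  have hy : ∀ j, f (y j) = y (j+1) := by
    intro j
    have h1 : f (y j) = f^[((j + (m-1)) % m) + 1] b := by
      simp only [hydef]
      rw [Function.iterate_succ_apply']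
    rw [h1, hbmod]
    have e1 : ((j + (m-1)) % m + 1) % m = (j + (m-1) + 1) % m := Nat.mod_add_mod _ _ _
    have e2 : j + (m-1) + 1 = (j+1) + (m-1) := by omega
    simp only [hydef]
    rw [e1, e2]
  have hyP : ∀ j, y j ∈ P := by
    intro j
    simp only [hydef]
    rw [← hsb, ← Function.iterate_add_apply, hmod]
    exact (hPmem _).2 ⟨_, Nat.mod_lt _ (by omega), rfl⟩
  have hyI : ∀ j, y j ∈ Set.Icc A B := fun j => hPIcc _ (hyP j)
  have hyper : ∀ j, y (j + m) = y j := by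
    intro j
    simp only [hydef]
    have e1 : j + m + (m-1) = (j + (m-1)) + m := by omega
    rw [e1, Nat.add_mod_right]
  have hyval : ∀ j, 1 ≤ j → j ≤ m → y j = f^[j-1] b := by
    intro j h1 h2
    simp only [hydef]
    have e1 : j + (m-1) = m + (j-1) := by omega
    rw [e1, Nat.add_mod_left, Nat.mod_eq_of_lt (by omega)]
  clear_value y
  clear hydef
  have hynz : ∀ j, y j ≠ z := by
    intro j h
    apply hPnofix (y j) (hyP j)
    rw [h, hfz]
  have hyleft : ∀ j, y j < z → y j ≤ b := by
    intro j h
    rcases hgap (y j) (hyP j) with h1 | h1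
    · exact h1
    · linarith
  have hyright : ∀ j, ¬ (y j < z) → c ≤ y j := by
    intro j h
    rcases hgap (y j) (hyP j) with h1 | h1
    · exfalso
      have h2 := not_lt.1 h
      linarith
    · exact h1
  -- y 2 = f b ≥ c > z
  have hfby2 : f b = y 2 := by rw [← hy1, hy 1]
  have hcy2 : c ≤ y 2 := by rw [← hfby2]; exact hfbc
  have hzy2 : z < y 2 := lt_of_lt_of_le hzc hcy2
  -- existence of a first index where two consecutive points lie on the same side
  have hex_k : ∃ j, 2 ≤ j ∧ j ≤ m ∧ ((y j < z) ↔ (y (j+1) < z)) := by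
    by_contra hcon
    push_neg at hcon
    have halt0 : ∀ j, 1 ≤ j → j ≤ m + 1 → ((y j < z) ↔ Odd j) := by
      intro j
      induction j with
      | zero => intro h; omega
      | succ j ih =>
        intro h1 hk'
        rcases Nat.lt_or_ge j 1 with h0 | h0
        · have : j = 0 := by omega
          subst this
          exact iff_of_true (by rw [hy1]; exact hbz) odd_one
        · have ihj := ih h0 (by omega)
          rcases Nat.lt_or_ge j 2 with hj2 | hj2
          · have : j = 1 := by omega
            subst this
            exact iff_of_false (not_lt.mpr hzy2.le) (fun ⟨r, hr⟩ => by omega)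
          · have hniff := hcon j hj2 (by omega)
            have h2 : (y (j+1) < z) ↔ ¬ (y j < z) := by
              rcases hniff with ⟨ha, hb⟩ | ⟨ha, hb⟩
              · constructor
                · intro hlt; exfalso; linarith
                · intro hnot; exact absurd ha hnot
              · constructor
                · intro _ hlt; linarith
                · intro _; exact hb
            rw [h2, ihj, Nat.odd_add_one]
    have h1 := (halt0 (m+1) (by omega) (le_refl _)).1
    have h2 : y (m+1) = b := by
      have e1 : m + 1 = 1 + m := by omega
      rw [e1, hyper 1, hy1]
    rw [h2] at h1
    obtain ⟨a0, ha0⟩ := h1 hbz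
    omega
  set k := Nat.find hex_k with hkdef
  obtain ⟨hk2, hkm, hkiff⟩ := Nat.find_spec hex_k
  have hkmin : ∀ j, j < k → ¬ (2 ≤ j ∧ j ≤ m ∧ ((y j < z) ↔ (y (j+1) < z))) := by
    intro j hj
    exact Nat.find_min hex_k hj
  -- alternation up to k
  have halt : ∀ j, 1 ≤ j → j ≤ k → ((y j < z) ↔ Odd j) := by
    intro j
    induction j with
    | zero => intro h; omega
    | succ j ih =>
      intro h1 hk'
      rcases Nat.lt_or_ge j 1 with h0 | h0
      · have : j = 0 := by omega
        subst this
        exact iff_of_true (by rw [hy1]; exact hbz) odd_one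
      · have ihj := ih h0 (by omega)
        rcases Nat.lt_or_ge j 2 with hj2 | hj2
        · have : j = 1 := by omega
          subst this
          exact iff_of_false (not_lt.mpr hzy2.le) (by decide)
        · have hniff' := hkmin j (by omega)
          have hniff : ¬ ((y j < z) ↔ (y (j+1) < z)) := by
            intro hiff
            exact hniff' ⟨hj2, by omega, hiff⟩
          have h2 : (y (j+1) < z) ↔ ¬ (y j < z) := by tauto
          rw [h2, ihj, Nat.odd_add_one]
  -- case split on the parity of k
  rcases Nat.even_or_odd k with hke | hko
  · -- k even : we must have k = m - 1 (mirror Stefan case)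
    obtain ⟨ak, hak⟩ := hke
    have hykz : z < y k := by
      have h1 : ¬ (y k < z) := by
        rw [halt k (by omega) (le_refl k)]
        intro ⟨a1, ha1⟩
        omega
      exact lt_of_le_of_ne (not_lt.1 h1) (Ne.symm (hynz k))
    have hyk1z : z < y (k+1) := by
      have h1 : ¬ (y (k+1) < z) := fun h => by
        have := hkiff.2 h
        linarith
      exact lt_of_le_of_ne (not_lt.1 h1) (Ne.symm (hynz (k+1)))
    have hcyk : c ≤ y k := hyright k (not_lt.2 hykz.le)
    have hcyk1 : c ≤ y (k+1) := hyright (k+1) (not_lt.2 hyk1z.le)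
    have hkm1 : k = m - 1 := by
      by_contra hne
      have hklt : k ≤ m - 3 := by omega
      -- loop of odd length k+1 < m
      have hfyk : f (y k) = y (k+1) := hy k
      refine genloop_right (t := k - 1) hAB hf hmap hno hbz hzc hfz hfcb hy hy1 hyI hzI hcI (hyI k)
        hcyk ?_ ?_ (by omega) ⟨ak - 1, by omega⟩ (by omega)
      · rw [show k - 1 + 1 = k by omega]
      · rw [hfyk]; exact hcyk1
    -- mirror extraction: k = m-1, y m > z
    have hymz : z < y m := by
      have : k + 1 = m := by omega
      rwa [this] at hyk1z
    rcases lt_or_ge (y (m-3)) (y (m-1)) with hcase | hcase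
    · -- extract mirror configuration
      have hq : z < y (m-3) := by
        by_cases h3 : m = 3
        · subst h3
          have h03 : y 0 = y 3 := (hyper 0).symm
          simpa [h03] using hymz
        · have hm5 : 5 ≤ m := by omega
          have h1 : ¬ (y (m-3) < z) := by
            rw [halt (m-3) (by omega) (by omega)]
            intro ⟨a1, ha1⟩
            omega
          exact lt_of_le_of_ne (not_lt.1 h1) (Ne.symm (hynz (m-3)))
      have hfq : f (y (m-3)) = y (m-2) := by
        have := hy (m-3)
        rwa [show m - 3 + 1 = m - 2 by omega] at this
      have hfqz : y (m-2) < z := by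
        rw [halt (m-2) (by omega) (by omega)]
        exact ⟨am - 1, by omega⟩
      have hf2q : f (y (m-2)) = y (m-1) := by
        have := hy (m-2)
        rwa [show m - 2 + 1 = m - 1 by omega] at this
      have hfp : f (y (m-1)) = y m := by
        have := hy (m-1)
        rwa [show m - 1 + 1 = m by omega] at this
      -- find w' in (q, p) with f w' = z
      have hwex : z ∈ f '' Set.Icc (y (m-3)) (y (m-1)) := by
        apply intermediate_value_Icc hcase.le
          (hf.mono (Set.Icc_subset_Icc (hyI (m-3)).1 (hyI (m-1)).2))
        rw [hfq, hfp]
        exact ⟨hfqz.le, hymz.le⟩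
      obtain ⟨w', hw'm, hfw'⟩ := hwex
      have hw'q : y (m-3) < w' := by
        refine lt_of_le_of_ne hw'm.1 (fun h => ?_)
        rw [← h, hfq] at hfw'
        exact absurd hfw' (by intro he; rw [he] at hfqz; linarith)
      have hw'p : w' < y (m-1) := by
        refine lt_of_le_of_ne hw'm.2 (fun h => ?_)
        rw [h, hfp] at hfw'
        exact absurd hfw' (by intro he; rw [he] at hymz; linarith)
      have hw'I : w' ∈ Set.Icc A B :=
        (Set.Icc_subset_Icc (hyI (m-3)).1 (hyI (m-1)).2) hw'm
      have hit2 : ∀ x : ℝ, f^[2] x = f (f x) := by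
        intro x
        rw [Function.iterate_succ_apply', Function.iterate_one]
      apply crit_down (contOn_iterate hf hmap 2) hzI hw'I hq hw'q
      · rw [hit2, hfz, hfz]
      · rw [hit2, hfw', hfz]
      · rw [hit2, hfq, hf2q]
        exact hw'p
    · -- contradiction
      exfalso
      by_cases h3 : m = 3
      · subst h3
        have h03 : y 0 = y 3 := (hyper 0).symm
        have h2r : b < y 2 := lt_trans hbz hzy2
        have h2f : f (y 2) < y 2 := hright (y 2) (hyP 2) h2r
        rw [hy 2] at h2f
        -- hcase : y 2 ≤ y 0 = y 3
        rw [show (3:ℕ) - 1 = 2 by norm_num, show (3:ℕ) - 3 = 0 by norm_num] at hcase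
        rw [h03] at hcase
        linarith
      · have hm5 : 5 ≤ m := by omega
        have hcym1 : c ≤ y (m-1) := by
          have : k = m - 1 := hkm1
          rw [← this]; exact hcyk
        have hfym1 : f (y (m-1)) = y m := by
          have := hy (m-1)
          rwa [show m - 1 + 1 = m by omega] at this
        refine genloop_right (t := m - 4) hAB hf hmap hno hbz hzc hfz hfcb hy hy1 hyI hzI hcI (hyI (m-1))
          hcym1 ?_ ?_ (by omega) ⟨am - 2, by omega⟩ (by omega)
        · rw [show m - 4 + 1 = m - 3 by omega]; exact hcase
        · rw [hfym1]
          exact hyright m (not_lt.2 hymz.le)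
  · -- k odd : we must have k = m (Stefan case)
    obtain ⟨ak, hak⟩ := hko
    have hykz : y k < z := by
      rw [halt k (by omega) (le_refl k)]
      exact ⟨ak, hak⟩
    have hyk1z : y (k+1) < z := hkiff.1 hykz
    have hykb : y k ≤ b := hyleft k hykz
    have hyk1b : y (k+1) ≤ b := hyleft (k+1) hyk1z
    have hk3 : 3 ≤ k := by omega
    have hkm' : k = m := by
      by_contra hne
      have hklt : k < m := by omega
      have hfyk : f (y k) = y (k+1) := hy k
      refine genloop_left (t := k - 1) hAB hf hmap hno hbz hfz hzy2 hy hy1 hyI hzI (hyI k)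
        ?_ hykb ?_ (by omega) ?_ (by omega)
      · rw [show k - 1 + 1 = k by omega]
      · rw [hfyk]; exact hyk1b
      · rw [show k - 1 + 1 = k by omega]; exact ⟨ak, hak⟩
    -- Stefan case: k = m, full alternation
    have haltm : ∀ j, 1 ≤ j → j ≤ m → ((y j < z) ↔ Odd j) := by
      intro j h1 h2
      exact halt j h1 (by omega)
    have hymz : y m < z := by
      rw [haltm m (by omega) (le_refl m)]
      exact ⟨am, ham⟩
    have hymb : y m ≤ b := hyleft m hymz
    rcases lt_or_ge (y m) (y (m-2)) with hcase | hcase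
    · -- extract the configuration
      have hqz : y (m-2) < z := by
        rw [haltm (m-2) (by omega) (by omega)]
        exact ⟨am - 1, by omega⟩
      have hfq : f (y (m-2)) = y (m-1) := by
        have := hy (m-2)
        rwa [show m - 2 + 1 = m - 1 by omega] at this
      have hfqz : z < y (m-1) := by
        have h1 : ¬ (y (m-1) < z) := by
          rw [haltm (m-1) (by omega) (by omega)]
          intro ⟨a1, ha1⟩
          omega
        exact lt_of_le_of_ne (not_lt.1 h1) (Ne.symm (hynz (m-1)))
      have hfp : f (y m) = b := by
        have h1 := hy m
        have h2 : y (m+1) = b := by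
          have e1 : m + 1 = 1 + m := by omega
          rw [e1, hyper 1, hy1]
        rw [h2] at h1
        exact h1
      -- find w in (p, q) with f w = z
      have hwex : z ∈ f '' Set.Icc (y m) (y (m-2)) := by
        apply intermediate_value_Icc hcase.le
          (hf.mono (Set.Icc_subset_Icc (hyI m).1 (hyI (m-2)).2))
        rw [hfp, hfq]
        exact ⟨hbz.le, hfqz.le⟩
      obtain ⟨w, hwm, hfw⟩ := hwex
      have hwp : y m < w := by
        refine lt_of_le_of_ne hwm.1 (fun h => ?_)
        rw [← h, hfp] at hfw
        exact absurd hfw hbz.ne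
      have hwq : w < y (m-2) := by
        refine lt_of_le_of_ne hwm.2 (fun h => ?_)
        rw [h, hfq] at hfw
        exact absurd hfw (by intro he; rw [he] at hfqz; linarith)
      have hwI : w ∈ Set.Icc A B :=
        (Set.Icc_subset_Icc (hyI m).1 (hyI (m-2)).2) hwm
      have hit2 : ∀ x : ℝ, f^[2] x = f (f x) := by
        intro x
        rw [Function.iterate_succ_apply', Function.iterate_one]
      have hf2q : f (y (m-1)) = y m := by
        have := hy (m-1)
        rwa [show m - 1 + 1 = m by omega] at this
      apply crit_up (contOn_iterate hf hmap 2) hwI hzI hwq hqz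
      · rw [hit2, hfw, hfz]
      · rw [hit2, hfz, hfz]
      · rw [hit2, hfq, hf2q]
        exact hwp
    · -- contradiction : y (m-2) ≤ y m
      exfalso
      by_cases h3 : m = 3
      · subst h3
        -- y 1 ≤ y 3, both equal to b would contradict least period
        rw [show (3:ℕ) - 2 = 1 by norm_num] at hcase
        rw [hy1] at hcase
        have h1 : y 3 = b := le_antisymm hymb hcase
        have h2 : y 3 = f^[2] b := hyval 3 (by omega) (by omega)
        rw [h2] at h1
        exact hbleast 2 (by omega) (by omega) h1
      · have hm5 : 5 ≤ m := by omega
        have hfym : f (y m) = b := by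
          have h1 := hy m
          have h2 : y (m+1) = b := by
            have e1 : m + 1 = 1 + m := by omega
            rw [e1, hyper 1, hy1]
          rw [h2] at h1
          exact h1
        refine genloop_left (t := m - 3) hAB hf hmap hno hbz hfz hzy2 hy hy1 hyI hzI (hyI m)
          ?_ hymb ?_ (by omega) ?_ (by omega)
        · rw [show m - 3 + 1 = m - 2 by omega]; exact hcase
        · rw [hfym]
        · rw [show m - 3 + 1 = m - 2 by omega]; exact ⟨am - 1, by omega⟩
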